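/- Let D = d/dx act on smooth real-valued functions on ℝ and let L denote multiplication by the linear function ax + b. Then for every odd n, B(n,0,L,D) applied to the constant function 1 is zero, and for every even n > 0, B(n,0,L,D) applied to 1 equals the constant function (n-1)!! a^{n/2}; here B(n,0,L,D) = Σ_{k=0}^{n} C(n,k) (D - L)^k L^{n-k}. -/

import Mathlib

noncomputable section

def SmoothR : Submodule ℝ (ℝ → ℝ) where
  carrier := {f | ContDiff ℝ (⊤ : ℕ∞) f}
  add_mem' := fun {a b} (ha : ContDiff ℝ (⊤ : ℕ∞) a) (hb : ContDiff ℝ (⊤ : ℕ∞) b) => ha.add hb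
  zero_mem' := (contDiff_const : ContDiff ℝ (⊤ : ℕ∞) fun _ => (0 : ℝ))
  smul_mem' := fun c f (hf : ContDiff ℝ (⊤ : ℕ∞) f) => hf.const_smul c

lemma smoothR_contDiff (f : SmoothR) : ContDiff ℝ (⊤ : ℕ∞) (f : ℝ → ℝ) := f.2

lemma smoothR_mem (f : ℝ → ℝ) (hf : ContDiff ℝ (⊤ : ℕ∞) f) : f ∈ SmoothR := hf

/-- Differentiation `d/dx` as a linear operator on smooth functions. -/
def Dop : Module.End ℝ SmoothR where
  toFun f := ⟨deriv f, smoothR_mem _ (contDiff_infty_iff_deriv.mp (smoothR_contDiff f)).2⟩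
  map_add' f g := by
    ext x
    exact deriv_add ((smoothR_contDiff f).differentiable (by simp) x)
      ((smoothR_contDiff g).differentiable (by simp) x)
  map_smul' c f := by
    ext x
    exact deriv_const_smul c ((smoothR_contDiff f).differentiable (by simp) x)

/-- Multiplication by a smooth function as a linear operator on smooth functions. -/
def Mop (g : ℝ → ℝ) (hg : ContDiff ℝ (⊤ : ℕ∞) g) : Module.End ℝ SmoothR where
  toFun f := ⟨g * f, smoothR_mem _ (hg.mul (smoothR_contDiff f))⟩
  map_add' f g' := by ext x; simp [mul_add]
  map_smul' c f := by ext x; simp; ring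

lemma linSmooth (a b : ℝ) : ContDiff ℝ (⊤ : ℕ∞) (fun x : ℝ => a * x + b) :=
  (contDiff_const.mul contDiff_id).add contDiff_const

section Abstract

variable {R : Type*} [Ring R] [Algebra ℝ R]

/-- Abstract version of the operator `B(n,0,L,D)`. -/
def Pabs (A B : R) (n : ℕ) : R :=
  ∑ k ∈ Finset.range (n + 1), ((n.choose k : ℝ)) • (A ^ k * B ^ (n - k))

variable {A B : R} {a : ℝ}

lemma wb_sub (h : A * B = B * A + a • 1) :
    (A - B) * B = B * (A - B) + a • 1 := by
  rw [sub_mul, mul_sub, h]; abel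

lemma wb_pow1 (h : A * B = B * A + a • 1) (k : ℕ) :
    A ^ (k+1) * B = B * A ^ (k+1) + (((k:ℝ)+1) * a) • A ^ k := by
  induction k with
  | zero => simpa using h
  | succ k ih =>
      have h1 : A ^ (k+1+1) * B = A * (A ^ (k+1) * B) := by
        rw [← mul_assoc, ← pow_succ']
      rw [h1, ih, mul_add, ← mul_assoc, h, mul_smul_comm, ← pow_succ',
        add_mul, smul_mul_assoc, one_mul, mul_assoc, ← pow_succ']
      push_cast
      module

lemma wb_pow (h : A * B = B * A + a • 1) (k : ℕ) :
    A ^ k * B = B * A ^ k + ((k:ℝ) * a) • A ^ (k-1) := by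
  cases k with
  | zero => simp
  | succ k =>
      have := wb_pow1 h k
      push_cast
      simpa using this

lemma wb_PB (h : A * B = B * A + a • 1) (n : ℕ) :
    Pabs A B (n+1) * B = B * Pabs A B (n+1) + (((n:ℝ)+1) * a) • Pabs A B n := by
  unfold Pabs
  rw [Finset.sum_mul]
  have step : ∀ k ∈ Finset.range (n+2),
      (((n+1).choose k : ℝ)) • (A ^ k * B ^ (n+1-k)) * B
      = (((n+1).choose k : ℝ)) • (B * (A ^ k * B ^ (n+1-k)))
        + (((n+1).choose k : ℝ)) • (((k:ℝ)*a) • (A ^ (k-1) * B ^ (n+1-k))) := by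
    intro k hk
    rw [smul_mul_assoc, mul_assoc]
    have hcomm : B ^ (n+1-k) * B = B * B ^ (n+1-k) := by
      rw [← pow_succ, ← pow_succ']
    rw [hcomm, ← mul_assoc, wb_pow h k, add_mul, smul_mul_assoc, mul_assoc, smul_add]
  rw [Finset.sum_congr rfl step, Finset.sum_add_distrib, Finset.mul_sum]
  congr 1
  · exact Finset.sum_congr rfl fun k _ => (mul_smul_comm _ _ _).symm
  · rw [Finset.sum_range_succ'
      (fun k => (((n+1).choose k : ℝ)) • (((k:ℝ)*a) • (A ^ (k-1) * B ^ (n+1-k))))]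
    simp only [Nat.cast_zero, zero_mul, zero_smul, smul_zero, add_zero]
    rw [Finset.smul_sum]
    refine Finset.sum_congr rfl ?_
    intro j hj
    rw [smul_smul, smul_smul]
    have e1 : j + 1 - 1 = j := by omega
    have e2 : n + 1 - (j+1) = n - j := by omega
    rw [e1, e2]
    congr 1
    have h := Nat.add_one_mul_choose_eq n j
    have h' : ((n+1) * n.choose j : ℕ) = ((n+1).choose (j+1) * (j+1) : ℕ) := h
    have h'' : (((n+1) * n.choose j : ℕ) : ℝ) = (((n+1).choose (j+1) * (j+1) : ℕ) : ℝ) := by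
      exact_mod_cast h'
    push_cast at h'' ⊢
    linear_combination (-a) * h''

lemma wb_pascal (n : ℕ) : Pabs A B (n+1) = A * Pabs A B n + Pabs A B n * B := by
  have hPB : Pabs A B n * B
      = ∑ k ∈ Finset.range (n + 1), ((n.choose k : ℝ)) • (A ^ k * B ^ (n + 1 - k)) := by
    unfold Pabs
    rw [Finset.sum_mul]
    refine Finset.sum_congr rfl ?_
    intro k hk
    rw [smul_mul_assoc, mul_assoc, ← pow_succ]
    have e : n - k + 1 = n + 1 - k := by
      have := Finset.mem_range.mp hk; omega
    rw [e]
  conv_lhs => unfold Pabs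
  rw [Finset.sum_range_succ']
  have hsplit : ∀ j ∈ Finset.range (n+1),
      (((n+1).choose (j+1) : ℝ)) • (A ^ (j+1) * B ^ (n+1-(j+1)))
      = ((n.choose j : ℝ)) • (A * (A ^ j * B ^ (n-j)))
        + ((n.choose (j+1) : ℝ)) • (A ^ (j+1) * B ^ (n+1-(j+1))) := by
    intro j hj
    have e : n + 1 - (j+1) = n - j := by omega
    rw [Nat.choose_succ_succ', e]
    push_cast
    rw [add_smul]
    congr 2
    rw [← mul_assoc, ← pow_succ']
  rw [Finset.sum_congr rfl hsplit, Finset.sum_add_distrib]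
  have h1 : ∑ j ∈ Finset.range (n+1), ((n.choose j : ℝ)) • (A * (A ^ j * B ^ (n-j)))
      = A * Pabs A B n := by
    unfold Pabs
    rw [Finset.mul_sum]
    exact Finset.sum_congr rfl fun j _ => (mul_smul_comm _ _ _).symm
  have h2 : (∑ j ∈ Finset.range (n+1), ((n.choose (j+1) : ℝ)) • (A ^ (j+1) * B ^ (n+1-(j+1))))
      + (((n+1).choose 0 : ℝ)) • (A ^ 0 * B ^ (n+1-0))
      = Pabs A B n * B := by
    rw [hPB, Finset.sum_range_succ'
      (fun k => ((n.choose k : ℝ)) • (A ^ k * B ^ (n + 1 - k)))]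
    rw [Finset.sum_range_succ]
    simp
  rw [add_assoc, h1, h2]

lemma wb_rec (h : A * B = B * A + a • 1) (n : ℕ) :
    Pabs A B (n+2) = (A + B) * Pabs A B (n+1) + (((n:ℝ)+1) * a) • Pabs A B n := by
  rw [wb_pascal (n+1), wb_PB h n, add_mul A B (Pabs A B (n+1)), ← add_assoc]

end Abstract

section Concrete

variable (a b : ℝ)

def oneS : SmoothR := ⟨fun _ : ℝ => (1 : ℝ), smoothR_mem _ contDiff_const⟩

def Pop (n : ℕ) : Module.End ℝ SmoothR :=
  ∑ k ∈ Finset.range (n + 1),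
    n.choose k • ((Dop - Mop (fun x => a * x + b) (linSmooth a b)) ^ k *
      (Mop (fun x => a * x + b) (linSmooth a b)) ^ (n - k))

lemma Pop_eq (n : ℕ) :
    Pop a b n = Pabs (Dop - Mop (fun x => a * x + b) (linSmooth a b))
      (Mop (fun x => a * x + b) (linSmooth a b)) n := by
  unfold Pop Pabs
  simp [Nat.cast_smul_eq_nsmul]

lemma hDB : Dop * Mop (fun x => a * x + b) (linSmooth a b)
    = Mop (fun x => a * x + b) (linSmooth a b) * Dop + a • (1 : Module.End ℝ SmoothR) := by
  apply LinearMap.ext; intro f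
  apply Subtype.ext; funext x
  have hf : DifferentiableAt ℝ (f : ℝ → ℝ) x :=
    (smoothR_contDiff f).differentiable (by simp) x
  have hl : DifferentiableAt ℝ (fun y : ℝ => a * y + b) x :=
    ((differentiable_id.const_mul a).add_const b).differentiableAt
  have hd : deriv (fun y : ℝ => a * y + b) x = a := by
    simpa using (((hasDerivAt_id x).const_mul a).add_const b).deriv
  show deriv ((fun y : ℝ => a * y + b) * (f : ℝ → ℝ)) x = _
  have hfun : ((fun y : ℝ => a * y + b) * (f : ℝ → ℝ))
      = fun y => (a * y + b) * (f : ℝ → ℝ) y := rfl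
  rw [hfun, deriv_fun_mul hl hf, hd]
  simp [Dop, Mop, oneS]
  ring

lemma hAB : (Dop - Mop (fun x => a * x + b) (linSmooth a b))
      * Mop (fun x => a * x + b) (linSmooth a b)
    = Mop (fun x => a * x + b) (linSmooth a b)
      * (Dop - Mop (fun x => a * x + b) (linSmooth a b))
      + a • (1 : Module.End ℝ SmoothR) :=
  wb_sub (R := Module.End ℝ SmoothR) (hDB a b)

lemma hrec (n : ℕ) : Pop a b (n+2)
    = Dop * Pop a b (n+1) + (((n:ℝ)+1) * a) • Pop a b n := by
  have hsum : (Dop - Mop (fun x => a * x + b) (linSmooth a b))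
      + Mop (fun x => a * x + b) (linSmooth a b) = Dop := by ext f; simp
  rw [Pop_eq, Pop_eq, Pop_eq, wb_rec (hAB a b) n, hsum]

lemma Dop_oneS : Dop oneS = 0 := by
  apply Subtype.ext
  show deriv (fun _ : ℝ => (1:ℝ)) = (0 : ℝ → ℝ)
  funext x
  simp

lemma hrec_apply (n : ℕ) : Pop a b (n+2) oneS
    = Dop (Pop a b (n+1) oneS) + (((n:ℝ)+1) * a) • (Pop a b n oneS) := by
  rw [hrec a b n]; rfl

/-- The scalar value `c n`. -/
def cf (n : ℕ) : ℝ := if Odd n then 0 else ((n-1).doubleFactorial : ℝ) * a ^ (n / 2)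

lemma cf_rec (n : ℕ) : cf a (n+2) = (((n:ℝ))+1) * a * cf a n := by
  rcases Nat.even_or_odd n with he | ho
  · have h1 : ¬ Odd n := (Nat.not_odd_iff_even).mpr he
    have h2 : ¬ Odd (n+2) := by
      intro h
      rcases h with ⟨m, hm⟩
      exact h1 ⟨m - 1, by omega⟩
    simp only [cf, if_neg h1, if_neg h2]
    rcases Nat.eq_zero_or_pos n with rfl | hn
    · simp [Nat.doubleFactorial]
    · have e1 : (n+2) - 1 = (n-1) + 2 := by omega
      rw [e1, Nat.doubleFactorial_add_two]
      have e2 : (n+2)/2 = n/2 + 1 := by omega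
      have e3 : (n - 1) + 2 = n + 1 := by omega
      rw [e2, e3]
      push_cast
      ring
  · have h2 : Odd (n+2) := by
      rcases ho with ⟨m, hm⟩
      exact ⟨m + 1, by omega⟩
    simp [cf, ho, h2]

lemma Pop_main (n : ℕ) : Pop a b n oneS = cf a n • oneS := by
  induction n using Nat.twoStepInduction with
  | zero =>
      have h0 : Pop a b 0 = 1 := by simp [Pop]
      rw [h0]
      simp [cf, Nat.doubleFactorial]
  | one =>
      have h1 : Pop a b 1 = Mop (fun x => a * x + b) (linSmooth a b)
          + (Dop - Mop (fun x => a * x + b) (linSmooth a b)) := by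
        simp [Pop, Finset.sum_range_succ]
      have h2 : Pop a b 1 oneS = Dop oneS := by
        rw [h1]
        rw [LinearMap.add_apply, LinearMap.sub_apply]
        abel
      rw [h2, Dop_oneS]
      simp [cf]
  | more n ih1 ih2 =>
      rw [hrec_apply a b n, ih1, ih2, cf_rec a n]
      rw [map_smul, Dop_oneS, smul_zero, zero_add, smul_smul]

end Concrete

/-- The operator `B(n, 0, L, D) = Σ C(n,k) (D - L)^k L^{n-k}` for `L` multiplication
by `ax + b`, applied to the constant function `1`: it vanishes for odd `n` and equals
the constant `(n-1)!! a^{n/2}` for even `n > 0`. -/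
theorem binom_linear_identities (a b : ℝ) (n : ℕ) :
    (Odd n →
      (∑ k ∈ Finset.range (n + 1),
        n.choose k • ((Dop - Mop (fun x => a * x + b) (linSmooth a b)) ^ k *
          (Mop (fun x => a * x + b) (linSmooth a b)) ^ (n - k)))
        ⟨fun _ : ℝ => (1 : ℝ), smoothR_mem _ contDiff_const⟩ = 0) ∧
    (Even n → 0 < n →
      (∑ k ∈ Finset.range (n + 1),
        n.choose k • ((Dop - Mop (fun x => a * x + b) (linSmooth a b)) ^ k *
          (Mop (fun x => a * x + b) (linSmooth a b)) ^ (n - k)))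
        ⟨fun _ : ℝ => (1 : ℝ), smoothR_mem _ contDiff_const⟩ =
      (Nat.doubleFactorial (n - 1) * a ^ (n / 2)) •
        ⟨fun _ : ℝ => (1 : ℝ), smoothR_mem _ contDiff_const⟩) := by
  constructor
  · intro hodd
    have h := Pop_main a b n
    unfold cf at h
    rw [if_pos hodd, zero_smul] at h
    exact h
  · intro he _
    have h := Pop_main a b n
    unfold cf at h
    rw [if_neg ((Nat.not_odd_iff_even).mpr he)] at h
    exact h


end
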